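/- arXiv:0910.1866 — 2 statements merged into one kernel-verified Lean document; each statement's English description precedes it below -/
import Mathlib

section
/- (Error expansion under perturbation.) Let (w₁,…,w_p) and (δ₁,…,δ_p) be tuples in ℂ[[X]] with w_p = δ_p = 0 such that, for each 1 ≤ j < p: w_j ≠ 0 with leading term m_j and constant term σ_j, where either σ_j = 1 and m_j = 1, or σ_j = 0 and ord(w_j) ≥ μ; and ord(δ_j) > ord(w_j) (so that w_j and w_j + δ_j have the same leading term m_j). Then for each 1 ≤ j < p with δ_j ≠ 0, one has ord( E_j(w+δ) − E_j(w) − X^{2μ}·(δ_{j+1} − δ₁) + m_j*·δ_j ) > ord(m_j*) + ord(δ_j). -/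
/-- `f` has leading term (leading monomial) `β·X^q`: the coefficient of `X^q` is `β ≠ 0`
and all lower coefficients vanish. -/
def HasLeadingTerm (f : PowerSeries ℂ) (β : ℂ) (q : ℕ) : Prop :=
  β ≠ 0 ∧ PowerSeries.coeff (R := ℂ) q f = β ∧ ∀ n < q, PowerSeries.coeff (R := ℂ) n f = 0

/-- `(u 1, …, u p)` is a solution of the escape-region equations of period `p`
(where `X` plays the role of `𝔱^{1/μ}`, i.e. of `ξ^{1/μ}` with `ξ = 1/(3a)`):
`u p = 0` and `X^{2μ}(u_{j+1} − u₁) = u_j²(u_j − 1)` for `1 ≤ j < p`. -/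
def IsEscapeSolution (p μ : ℕ) (u : ℕ → PowerSeries ℂ) : Prop :=
  u p = 0 ∧ ∀ j, 1 ≤ j → j < p →
    (PowerSeries.X : PowerSeries ℂ) ^ (2 * μ) * (u (j + 1) - u 1)
      = (u j) ^ 2 * (u j - 1)

/-- The error `E_j(w) = X^{2μ}(w_{j+1} − w₁) − w_j²(w_j − 1)`. -/
noncomputable def Err (μ : ℕ) (w : ℕ → PowerSeries ℂ) (j : ℕ) : PowerSeries ℂ :=
  (PowerSeries.X : PowerSeries ℂ) ^ (2 * μ) * (w (j + 1) - w 1) - (w j) ^ 2 * (w j - 1)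

/-- **Error expansion under perturbation.** With `w_p = δ_p = 0`, each `w_j ≠ 0` having
leading term `m_j = β_j·X^{q_j}` and constant term `σ_j` (either `σ_j = 1` with
`m_j = 1`, or `σ_j = 0` with `ord(w_j) ≥ μ`), and `ord(δ_j) > ord(w_j)`, one has for
each `j` with `δ_j ≠ 0` (writing `d_j = ord(δ_j)` and
`m_j* = (3σ_j − 2)·m_j`):
`ord(E_j(w+δ) − E_j(w) − X^{2μ}(δ_{j+1} − δ₁) + m_j*·δ_j) > ord(m_j*) + ord(δ_j)`. -/
theorem error_expansion (p μ : ℕ) (hp : 1 ≤ p) (hμ : 1 ≤ μ)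
    (w δ : ℕ → PowerSeries ℂ) (hwp : w p = 0) (hδp : δ p = 0)
    (β : ℕ → ℂ) (q : ℕ → ℕ)
    (hwl : ∀ j, 1 ≤ j → j < p → HasLeadingTerm (w j) (β j) (q j))
    (hcases : ∀ j, 1 ≤ j → j < p →
      (PowerSeries.constantCoeff (R := ℂ) (w j) = 1 ∧ q j = 0 ∧ β j = 1) ∨
      (PowerSeries.constantCoeff (R := ℂ) (w j) = 0 ∧ μ ≤ q j))
    (hδsmall : ∀ j, 1 ≤ j → j < p → ∀ n ≤ q j, PowerSeries.coeff (R := ℂ) n (δ j) = 0) :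
    ∀ j, 1 ≤ j → j < p → δ j ≠ 0 →
      ∀ d : ℕ, (∀ n < d, PowerSeries.coeff (R := ℂ) n (δ j) = 0) →
        PowerSeries.coeff (R := ℂ) d (δ j) ≠ 0 →
        ∀ m ≤ q j + d,
          PowerSeries.coeff (R := ℂ) m
            (Err μ (fun k => w k + δ k) j - Err μ w j
              - (PowerSeries.X : PowerSeries ℂ) ^ (2 * μ) * (δ (j + 1) - δ 1)
              + (PowerSeries.monomial (R := ℂ) (q j)
                  ((3 * PowerSeries.constantCoeff (R := ℂ) (w j) - 2) * β j)) * δ j) = 0 := by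
  intro j hj1 hjp hδj d hdlow hdne m hm
  obtain ⟨hβne, hβcoeff, hlow⟩ := hwl j hj1 hjp
  have hqd : q j < d := by
    by_contra h
    push_neg at h
    exact hdne (hδsmall j hj1 hjp d h)
  have hXd : (PowerSeries.X : PowerSeries ℂ) ^ d ∣ δ j :=
    PowerSeries.X_pow_dvd_iff.mpr hdlow
  have hEq : Err μ (fun k => w k + δ k) j - Err μ w j
        - (PowerSeries.X : PowerSeries ℂ) ^ (2 * μ) * (δ (j + 1) - δ 1)
        + (PowerSeries.monomial (R := ℂ) (q j)
            ((3 * PowerSeries.constantCoeff (R := ℂ) (w j) - 2) * β j)) * δ j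
      = ((PowerSeries.monomial (R := ℂ) (q j)
            ((3 * PowerSeries.constantCoeff (R := ℂ) (w j) - 2) * β j))
          - (3 * (w j) ^ 2 - 2 * w j)) * δ j
        - (3 * w j - 1) * (δ j) ^ 2 - (δ j) ^ 3 := by
    simp only [Err]
    ring
  rw [hEq]
  -- divisibility of the first factor by X^(q j + 1)
  have hg : (PowerSeries.X : PowerSeries ℂ) ^ (q j + 1) ∣
      ((PowerSeries.monomial (R := ℂ) (q j)
          ((3 * PowerSeries.constantCoeff (R := ℂ) (w j) - 2) * β j))
        - (3 * (w j) ^ 2 - 2 * w j)) := by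
    rcases hcases j hj1 hjp with ⟨hc1, hq0, hβ1⟩ | ⟨hc0, hμq⟩
    · -- case σ = 1, q = 0, β = 1 : factor through (w j - 1)
      have hdvd1 : (PowerSeries.X : PowerSeries ℂ) ^ 1 ∣ (w j - 1) := by
        rw [PowerSeries.X_pow_dvd_iff]
        intro n hn
        interval_cases n
        simp [PowerSeries.coeff_zero_eq_constantCoeff, hc1]
      have hms : (PowerSeries.monomial (R := ℂ) (q j)
          ((3 * PowerSeries.constantCoeff (R := ℂ) (w j) - 2) * β j)) = 1 := by
        rw [hc1, hq0, hβ1]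
        norm_num
      rw [hms, hq0]
      have hfac : (1 : PowerSeries ℂ) - (3 * (w j) ^ 2 - 2 * w j)
          = -((3 * w j + 1) * (w j - 1)) := by ring
      rw [hfac]
      exact (hdvd1.mul_left _).neg_right
    · -- case σ = 0, μ ≤ q
      have hq1 : 1 ≤ q j := le_trans hμ hμq
      have hg1 : (PowerSeries.X : PowerSeries ℂ) ^ (q j + 1) ∣
          ((PowerSeries.monomial (R := ℂ) (q j)
            ((3 * PowerSeries.constantCoeff (R := ℂ) (w j) - 2) * β j)) + 2 * w j) := by
        rw [PowerSeries.X_pow_dvd_iff]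
        intro n hn
        rw [map_add, PowerSeries.coeff_monomial]
        rcases eq_or_lt_of_le (Nat.lt_succ_iff.mp hn) with heq | hlt
        · rw [if_pos heq, hc0, heq]
          have : (PowerSeries.coeff (R := ℂ) (q j)) (2 * w j) = 2 * β j := by
            have h2 : (2 : PowerSeries ℂ) * w j = w j + w j := by ring
            rw [h2, map_add, hβcoeff]; ring
          rw [this]; ring
        · rw [if_neg (by omega)]
          have : (PowerSeries.coeff (R := ℂ) n) (2 * w j) = 0 := by
            have h2 : (2 : PowerSeries ℂ) * w j = w j + w j := by ring
            rw [h2, map_add, hlow n hlt]; ring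
          rw [this]; ring
      have hg2 : (PowerSeries.X : PowerSeries ℂ) ^ (q j + 1) ∣ 3 * (w j) ^ 2 := by
        have hw : (PowerSeries.X : PowerSeries ℂ) ^ (q j) ∣ w j :=
          PowerSeries.X_pow_dvd_iff.mpr hlow
        have := pow_dvd_pow_of_dvd hw 2
        rw [← pow_mul] at this
        exact ((pow_dvd_pow (PowerSeries.X : PowerSeries ℂ)
          (by omega : q j + 1 ≤ q j * 2)).trans this).mul_left 3
      have hsplit : (PowerSeries.monomial (R := ℂ) (q j)
            ((3 * PowerSeries.constantCoeff (R := ℂ) (w j) - 2) * β j))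
          - (3 * (w j) ^ 2 - 2 * w j)
          = ((PowerSeries.monomial (R := ℂ) (q j)
              ((3 * PowerSeries.constantCoeff (R := ℂ) (w j) - 2) * β j)) + 2 * w j)
            - 3 * (w j) ^ 2 := by ring
      rw [hsplit]
      exact dvd_sub hg1 hg2
  -- each of the three summands is divisible by X^(q j + d + 1)
  have h1 : (PowerSeries.X : PowerSeries ℂ) ^ (q j + d + 1) ∣
      ((PowerSeries.monomial (R := ℂ) (q j)
          ((3 * PowerSeries.constantCoeff (R := ℂ) (w j) - 2) * β j))
        - (3 * (w j) ^ 2 - 2 * w j)) * δ j := by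
    have : (PowerSeries.X : PowerSeries ℂ) ^ (q j + d + 1)
        = (PowerSeries.X : PowerSeries ℂ) ^ (q j + 1) * (PowerSeries.X : PowerSeries ℂ) ^ d := by
      rw [← pow_add]; ring_nf
    rw [this]
    exact mul_dvd_mul hg hXd
  have hXd2 : (PowerSeries.X : PowerSeries ℂ) ^ (q j + d + 1) ∣ (δ j) ^ 2 := by
    have := pow_dvd_pow_of_dvd hXd 2
    rw [← pow_mul] at this
    exact (pow_dvd_pow (PowerSeries.X : PowerSeries ℂ) (by omega : q j + d + 1 ≤ d * 2)).trans this
  have h2 : (PowerSeries.X : PowerSeries ℂ) ^ (q j + d + 1) ∣ (3 * w j - 1) * (δ j) ^ 2 :=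
    hXd2.mul_left _
  have h3 : (PowerSeries.X : PowerSeries ℂ) ^ (q j + d + 1) ∣ (δ j) ^ 3 := by
    have := pow_dvd_pow_of_dvd hXd 3
    rw [← pow_mul] at this
    exact (pow_dvd_pow (PowerSeries.X : PowerSeries ℂ) (by omega : q j + d + 1 ≤ d * 3)).trans this
  have htot := dvd_sub (dvd_sub h1 h2) h3
  exact PowerSeries.X_pow_dvd_iff.mp htot m (by omega)
end

section
/- (Trivial kneading sequence gives a quadratic critical orbit.) Let (u₁,…,u_p) be a solution of the escape-region equations whose kneading sequence is trivial, i.e. σ_j = 0 (u_j has zero constant term) for all 1 ≤ j < p. Then X^{2μ} divides every u_j, and the complex numbers c_j := −(coefficient of X^{2μ} in u_j), for 1 ≤ j ≤ p (so that c_p = 0), satisfy c_{j+1} = c_j² + c₁ for all 1 ≤ j < p. Thus 0 ↦ c₁ ↦ c₂ ↦ ⋯ ↦ c_{p−1} ↦ 0 is a period-p orbit of the quadratic map z ↦ z² + c₁ containing its critical point 0. -/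
open PowerSeries

lemma coeff_mul_of_dvd {f g : PowerSeries ℂ} {m : ℕ}
    (hf : (PowerSeries.X : PowerSeries ℂ) ^ m ∣ f)
    (hg : (PowerSeries.X : PowerSeries ℂ) ^ m ∣ g) :
    PowerSeries.coeff (R := ℂ) (m + m) (f * g) = PowerSeries.coeff (R := ℂ) m f * PowerSeries.coeff (R := ℂ) m g := by
  rw [PowerSeries.X_pow_dvd_iff] at hf hg
  rw [PowerSeries.coeff_mul]
  apply Finset.sum_eq_single (m, m)
  · rintro ⟨a, b⟩ hab hne
    rw [Finset.HasAntidiagonal.mem_antidiagonal] at hab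
    by_cases ha : a < m
    · rw [hf a ha, zero_mul]
    · have hb : b < m := by
        rcases Nat.lt_or_ge b m with h | h
        · exact h
        · exfalso; apply hne
          have : a = m := by omega
          have : b = m := by omega
          simp_all
      rw [hg b hb, mul_zero]
  · intro h
    simp at h

lemma X_pow_dvd_of_sq {f : PowerSeries ℂ} {m n : ℕ}
    (h : (PowerSeries.X : PowerSeries ℂ) ^ m ∣ f ^ 2) (hm : 2 * n ≤ m + 1) :
    (PowerSeries.X : PowerSeries ℂ) ^ n ∣ f := by
  rw [PowerSeries.X_pow_dvd_iff] at h ⊢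
  by_contra hcon
  push_neg at hcon
  obtain ⟨i0, hi0n, hi0⟩ := hcon
  have hex : ∃ i, PowerSeries.coeff (R := ℂ) i f ≠ 0 := ⟨i0, hi0⟩
  have hif : PowerSeries.coeff (R := ℂ) (Nat.find hex) f ≠ 0 := Nat.find_spec hex
  set i := Nat.find hex with hidef
  have hmin : ∀ k < i, PowerSeries.coeff (R := ℂ) k f = 0 := by
    intro k hk
    by_contra hknz
    exact Nat.find_min hex hk hknz
  have hin : i < n := lt_of_le_of_lt (Nat.find_min' hex hi0) hi0n
  have h2 : PowerSeries.coeff (R := ℂ) (i + i) (f ^ 2)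
      = PowerSeries.coeff (R := ℂ) i f * PowerSeries.coeff (R := ℂ) i f := by
    rw [sq, PowerSeries.coeff_mul]
    apply Finset.sum_eq_single (i, i)
    · rintro ⟨a, b⟩ hab hne
      rw [Finset.HasAntidiagonal.mem_antidiagonal] at hab
      by_cases ha : a < i
      · rw [hmin a ha, zero_mul]
      · have hb : b < i := by
          rcases Nat.lt_or_ge b i with h' | h'
          · exact h'
          · exfalso; apply hne
            have : a = i := by omega
            have : b = i := by omega
            simp_all
        rw [hmin b hb, mul_zero]
    · intro h'
      simp at h'
  have hlt : i + i < m := by omega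
  rw [h (i + i) hlt] at h2
  exact hif (by
    have := h2.symm
    exact mul_self_eq_zero.mp this)


/-- **Trivial kneading sequence gives a quadratic critical orbit.** If every `u_j`
(`1 ≤ j < p`) has vanishing constant term, then `X^{2μ}` divides every `u_j`, and the
numbers `c_j := −(coefficient of X^{2μ} in u_j)` (so `c_p = 0`) satisfy
`c_{j+1} = c_j² + c₁`; thus `0 ↦ c₁ ↦ ⋯ ↦ c_{p−1} ↦ 0` is a period-`p` critical orbit
of `z ↦ z² + c₁`. -/
theorem trivial_kneading_quadratic (p μ : ℕ) (hp : 1 ≤ p) (hμ : 1 ≤ μ)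
    (u : ℕ → PowerSeries ℂ) (hu : IsEscapeSolution p μ u)
    (hσ : ∀ j, 1 ≤ j → j < p → PowerSeries.constantCoeff (R := ℂ) (u j) = 0)
    (c : ℕ → ℂ) (hc : ∀ j, c j = -(PowerSeries.coeff (R := ℂ) (2 * μ) (u j))) :
    (∀ j, 1 ≤ j → j ≤ p → (PowerSeries.X : PowerSeries ℂ) ^ (2 * μ) ∣ u j) ∧
    c p = 0 ∧
    (∀ j, 1 ≤ j → j < p → c (j + 1) = (c j) ^ 2 + c 1) := by
  obtain ⟨hup, heq⟩ := hu
  -- units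
  have hunit : ∀ j, 1 ≤ j → j < p → IsUnit (u j - 1) := by
    intro j h1 h2
    rw [PowerSeries.isUnit_iff_constantCoeff]
    simp [hσ j h1 h2]
  -- main induction
  have key : ∀ k, ∀ j, 1 ≤ j → j ≤ p →
      (PowerSeries.X : PowerSeries ℂ) ^ (min k (2 * μ)) ∣ u j := by
    intro k
    induction k with
    | zero => intro j _ _; simp
    | succ k ih =>
      intro j h1 h2
      by_cases hk : 2 * μ ≤ k
      · have : min (k + 1) (2 * μ) = min k (2 * μ) := by omega
        rw [this]; exact ih j h1 h2
      · push_neg at hk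
        have hmk : min k (2 * μ) = k := by omega
        have hmk1 : min (k + 1) (2 * μ) = k + 1 := by omega
        rw [hmk1]
        rcases Nat.lt_or_ge j p with hjp | hjp
        · -- use the equation at j
          have hdvd1 : (PowerSeries.X : PowerSeries ℂ) ^ k ∣ u (j + 1) - u 1 := by
            have ha := ih (j + 1) (by omega) (by omega)
            have hb := ih 1 (le_refl 1) hp
            rw [hmk] at ha hb
            exact dvd_sub ha hb
          have hdvd2 : (PowerSeries.X : PowerSeries ℂ) ^ (2 * μ + k) ∣ (u j) ^ 2 * (u j - 1) := by
            rw [← heq j h1 hjp, pow_add]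
            exact mul_dvd_mul dvd_rfl hdvd1
          have hdvd3 : (PowerSeries.X : PowerSeries ℂ) ^ (2 * μ + k) ∣ (u j) ^ 2 :=
            ((hunit j h1 hjp).dvd_mul_right).mp hdvd2
          have hn : (PowerSeries.X : PowerSeries ℂ) ^ (μ + (k + 1) / 2) ∣ u j :=
            X_pow_dvd_of_sq hdvd3 (by omega)
          exact dvd_trans (pow_dvd_pow _ (by omega)) hn
        · have : j = p := by omega
          rw [this, hup]; exact dvd_zero _
  have keydvd : ∀ j, 1 ≤ j → j ≤ p → (PowerSeries.X : PowerSeries ℂ) ^ (2 * μ) ∣ u j := by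
    intro j h1 h2
    have := key (2 * μ) j h1 h2
    simpa using this
  refine ⟨keydvd, ?_, ?_⟩
  · rw [hc p, hup]; simp
  · intro j h1 h2
    have hj := keydvd j h1 (le_of_lt h2)
    have hj1 := keydvd (j + 1) (by omega) (by omega)
    have h1' := keydvd 1 (le_refl 1) hp
    -- coefficient at 2μ + 2μ of the equation
    have hco := congrArg (PowerSeries.coeff (R := ℂ) (2 * μ + 2 * μ)) (heq j h1 h2)
    rw [PowerSeries.coeff_X_pow_mul] at hco
    -- RHS: u_j^2 * (u_j - 1) = u_j^3 - u_j^2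
    have hexp : (u j) ^ 2 * (u j - 1) = (u j) ^ 3 - (u j) ^ 2 := by ring
    rw [hexp] at hco
    simp only [map_sub] at hco
    have hcube : PowerSeries.coeff (R := ℂ) (2 * μ + 2 * μ) ((u j) ^ 3) = 0 := by
      have : (PowerSeries.X : PowerSeries ℂ) ^ (3 * (2 * μ)) ∣ (u j) ^ 3 := by
        rw [show (3 * (2 * μ)) = (2 * μ) * 3 by ring, pow_mul]
        exact pow_dvd_pow_of_dvd hj 3
      rw [PowerSeries.X_pow_dvd_iff] at this
      exact this _ (by omega)
    have hsq : PowerSeries.coeff (R := ℂ) (2 * μ + 2 * μ) ((u j) ^ 2)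
        = PowerSeries.coeff (R := ℂ) (2 * μ) (u j) * PowerSeries.coeff (R := ℂ) (2 * μ) (u j) := by
      rw [sq]; exact coeff_mul_of_dvd hj hj
    rw [hcube, hsq] at hco
    have e1 := hc j
    have e2 := hc (j + 1)
    have e3 := hc 1
    rw [e1, e2, e3]
    linear_combination -hco
end
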